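/- Let φ, ψ ∈ L^∞(𝕋ⁿ). If ψ is an analytic symbol, or if the complex conjugate φ̄ is an analytic symbol, then T_{φ,△ₙ} T_{ψ,△ₙ} = T_{φψ,△ₙ} on H²(∂_d△ₙ). -/

import Mathlib

open MeasureTheory Filter Topology ComplexConjugate

noncomputable section

instance fact_one_pos : Fact ((0:ℝ) < 1) := ⟨one_pos⟩

abbrev Torus (n : ℕ) := Fin n → AddCircle (1 : ℝ)

abbrev L2T (n : ℕ) := Lp ℂ 2 (volume : Measure (Torus n))

abbrev LinfT (n : ℕ) := Lp ℂ ⊤ (volume : Measure (Torus n))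

def char {n : ℕ} (α : Fin n → ℤ) : Torus n → ℂ := fun x => ∏ j, fourier (α j) (x j)

lemma char_continuous {n : ℕ} (α : Fin n → ℤ) : Continuous (char α) :=
  continuous_finsetProd _ fun j _ => (fourier (α j)).continuous.comp (continuous_apply j)

lemma char_memLp {n : ℕ} (α : Fin n → ℤ) (p : ENNReal) :
    MemLp (char α) p (volume : Measure (Torus n)) := by
  refine (memLp_top_of_bound ((char_continuous α).aestronglyMeasurable) 1 ?_).mono_exponent le_top
  filter_upwards with x
  simp only [char, norm_prod]
  calc ∏ j, ‖fourier (α j) (x j)‖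
      = ∏ j : Fin n, (1:ℝ) := by
        refine Finset.prod_congr rfl fun j _ => ?_
        rw [fourier_apply]; exact Circle.norm_coe _
    _ ≤ 1 := by simp

def charL2 {n : ℕ} (α : Fin n → ℤ) : L2T n := (char_memLp α 2).toLp (char α)

def hardyT (n : ℕ) : Submodule ℂ (L2T n) :=
  (Submodule.span ℂ
    (charL2 '' {α : Fin n → ℤ | ∀ k : Fin n, 0 ≤ (∑ j ∈ Finset.Iic k, α j) + (k.val : ℤ)})).topologicalClosure

def hardyD (n : ℕ) : Submodule ℂ (L2T n) :=
  (Submodule.span ℂ (charL2 '' {α : Fin n → ℤ | ∀ j, 0 ≤ α j})).topologicalClosure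

instance hardyT.completeSpace (n : ℕ) : CompleteSpace (hardyT n) :=
  (Submodule.isClosed_topologicalClosure _).completeSpace_coe

instance hardyD.completeSpace (n : ℕ) : CompleteSpace (hardyD n) :=
  (Submodule.isClosed_topologicalClosure _).completeSpace_coe

def IsToeplitzOn {n : ℕ} (K : Submodule ℂ (L2T n)) (φ : Torus n → ℂ) (T : K →L[ℂ] K) : Prop :=
  ∀ f g : K,
    (inner ℂ ((g : L2T n)) ((T f : L2T n)) : ℂ) =
      ∫ x, conj ((g : L2T n) x) * (φ x * (f : L2T n) x) ∂volume

def IsCoordMult {n : ℕ} (j : Fin n) (M : hardyT n →L[ℂ] hardyT n) : Prop :=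
  ∀ f : hardyT n,
    ((M f : L2T n) : Torus n → ℂ) =ᵐ[volume]
      fun x => fourier 1 (x j) * ((f : L2T n) : Torus n → ℂ) x

def IsHankelT {n : ℕ} (φ : Torus n → ℂ) (H : hardyT n →L[ℂ] L2T n) : Prop :=
  (∀ f : hardyT n, H f ∈ (hardyT n)ᗮ) ∧
    ∀ f : hardyT n, ∀ g : L2T n, g ∈ (hardyT n)ᗮ →
      (inner ℂ g (H f) : ℂ) = ∫ x, conj (g x) * (φ x * (f : L2T n) x) ∂volume

def IsAnalyticSymbolF {n : ℕ} (φ : Torus n → ℂ) : Prop :=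
  ∀ α : Fin n → ℤ, (¬ ∀ k : Fin n, 0 ≤ ∑ j ∈ Finset.Iic k, α j) →
    ∫ x, φ x * char (-α) x ∂(volume : Measure (Torus n)) = 0

def IsInnerSymbolF {n : ℕ} (φ : Torus n → ℂ) : Prop :=
  IsAnalyticSymbolF φ ∧ ∀ᵐ x ∂(volume : Measure (Torus n)), ‖φ x‖ = 1

def tauMap {n : ℕ} (x : Torus n) : Torus n := fun j => ∑ k ∈ Finset.Ici j, x k

def sigmaMap {n : ℕ} (x : Torus n) : Torus n :=
  fun j => if h : (j : ℕ) + 1 < n then x j - x ⟨(j : ℕ) + 1, h⟩ else x j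

def jacF {n : ℕ} (x : Torus n) : ℂ := ∏ j : Fin n, fourier (j.val : ℤ) (x j)

def jacInvF {n : ℕ} (x : Torus n) : ℂ :=
  ∏ j : Fin n, fourier (if j.val = 0 then (0 : ℤ) else -1) (x j)

section Aux
open MeasureTheory Submodule

instance : IsProbabilityMeasure (volume : Measure (AddCircle (1:ℝ))) :=
  ⟨by simp [AddCircle.measure_univ]⟩

example (n : ℕ) : IsProbabilityMeasure (volume : Measure (Torus n)) := inferInstance

lemma volume_eq_haar : (volume : Measure (AddCircle (1:ℝ))) = AddCircle.haarAddCircle := by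
  rw [AddCircle.volume_eq_smul_haarAddCircle]; simp

lemma integral_fourier_unit (m : ℤ) :
    ∫ x : AddCircle (1:ℝ), (fourier m x : ℂ) = if m = 0 then 1 else 0 := by
  split_ifs with h
  · subst h
    simp [fourier_zero]
  · exact MeasureTheory.integral_eq_zero_of_add_right_eq_neg
      (fourier_add_half_inv_index h one_pos)

end Aux
section Aux2
open MeasureTheory Submodule

lemma integral_char {n : ℕ} (α : Fin n → ℤ) :
    ∫ x : Torus n, char α x = if α = 0 then 1 else 0 := by
  have h := MeasureTheory.integral_fintype_prod_eq_prod (ι := Fin n) (μ := fun _ => volume)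
    (fun j (t : AddCircle (1:ℝ)) => (fourier (α j) t : ℂ))
  simp only [char]
  rw [← MeasureTheory.volume_pi] at h
  rw [h]
  simp_rw [integral_fourier_unit]
  by_cases hα : α = 0
  · subst hα; simp
  · rw [if_neg hα]
    obtain ⟨j, hj⟩ : ∃ j, α j ≠ 0 := by
      by_contra hc; push_neg at hc; exact hα (funext hc)
    exact Finset.prod_eq_zero (Finset.mem_univ j) (by rw [if_neg hj])

lemma char_conj_mul {n : ℕ} (β α : Fin n → ℤ) (x : Torus n) :
    (starRingEnd ℂ) (char β x) * char α x = char (α - β) x := by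
  simp only [char, map_prod, ← Finset.prod_mul_distrib]
  refine Finset.prod_congr rfl fun j _ => ?_
  rw [← fourier_neg, ← fourier_add]
  congr 1
  simp [sub_eq_neg_add]

lemma coeFn_charL2 {n : ℕ} (α : Fin n → ℤ) :
    (charL2 α : Torus n → ℂ) =ᵐ[volume] char α :=
  (char_memLp α 2).coeFn_toLp

lemma inner_charL2 {n : ℕ} (α β : Fin n → ℤ) :
    (inner ℂ (charL2 α) (charL2 β) : ℂ) = if α = β then 1 else 0 := by
  rw [MeasureTheory.L2.inner_def]
  have : ∀ᵐ x ∂(volume : Measure (Torus n)),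
      (inner ℂ ((charL2 α : L2T n) x) ((charL2 β : L2T n) x) : ℂ) = char (β - α) x := by
    filter_upwards [coeFn_charL2 α, coeFn_charL2 β] with x hx hy
    rw [hx, hy, RCLike.inner_apply', char_conj_mul]
  rw [integral_congr_ae this, integral_char]
  by_cases h : α = β
  · subst h; simp
  · rw [if_neg h, if_neg (fun hc => h (sub_eq_zero.mp hc).symm)]

end Aux2
section Aux3
open MeasureTheory Submodule Set

def charCM {n : ℕ} (α : Fin n → ℤ) : C(Torus n, ℂ) := ⟨char α, char_continuous α⟩

lemma charCM_mul {n : ℕ} (α β : Fin n → ℤ) : charCM α * charCM β = charCM (α + β) := by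
  ext x
  simp only [ContinuousMap.mul_apply, charCM, ContinuousMap.coe_mk, char,
    ← Finset.prod_mul_distrib]
  exact Finset.prod_congr rfl fun j _ => (fourier_add).symm

lemma charCM_one {n : ℕ} : (1 : C(Torus n, ℂ)) = charCM 0 := by
  ext x
  simp [charCM, char, fourier_zero]

lemma star_charCM {n : ℕ} (α : Fin n → ℤ) : star (charCM α) = charCM (-α) := by
  ext z
  show star (char α z) = char (-α) z
  simp only [char, star_prod]
  exact Finset.prod_congr rfl fun j _ => fourier_neg.symm

def charSubalgebra (n : ℕ) : StarSubalgebra ℂ C(Torus n, ℂ) where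
  toSubalgebra := Algebra.adjoin ℂ (range charCM)
  star_mem' := by
    show Algebra.adjoin ℂ (range (charCM (n := n))) ≤
      star (Algebra.adjoin ℂ (range (charCM (n := n))))
    refine Algebra.adjoin_le ?_
    rintro - ⟨α, rfl⟩
    exact Algebra.subset_adjoin ⟨-α, (star_charCM α).symm⟩

lemma charSubalgebra_coe (n : ℕ) :
    Subalgebra.toSubmodule (charSubalgebra n).toSubalgebra = span ℂ (range charCM) := by
  apply Algebra.adjoin_eq_span_of_subset
  refine Subset.trans ?_ Submodule.subset_span
  intro x hx
  refine Submonoid.closure_induction (fun _ => id) ⟨0, charCM_one.symm⟩ ?_ hx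
  rintro x y - - ⟨a, rfl⟩ ⟨b, rfl⟩
  exact ⟨a + b, (charCM_mul a b).symm⟩

lemma charSubalgebra_separatesPoints (n : ℕ) : (charSubalgebra n).SeparatesPoints := by
  intro x y hxy
  obtain ⟨j, hj⟩ : ∃ j, x j ≠ y j := by
    by_contra hc; push_neg at hc; exact hxy (funext hc)
  refine ⟨_, ⟨charCM (Pi.single j 1), Algebra.subset_adjoin ⟨Pi.single j 1, rfl⟩, rfl⟩, ?_⟩
  have hev : ∀ z : Torus n, charCM (Pi.single j 1) z = fourier 1 (z j) := by
    intro z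
    show char (Pi.single j 1) z = _
    simp only [char]
    rw [Finset.prod_eq_single j]
    · rw [Pi.single_eq_same]
    · intro b _ hb
      rw [Pi.single_eq_of_ne hb]
      exact fourier_zero
    · intro h; exact absurd (Finset.mem_univ j) h
  dsimp only
  rw [hev, hev, fourier_one, fourier_one]
  intro hc
  rw [Circle.coe_inj] at hc
  exact hj (AddCircle.injective_toCircle one_ne_zero hc)

lemma charSubalgebra_closure_eq_top (n : ℕ) :
    (charSubalgebra n).topologicalClosure = ⊤ :=
  ContinuousMap.starSubalgebra_topologicalClosure_eq_top_of_separatesPoints _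
    (charSubalgebra_separatesPoints n)

lemma span_charCM_closure_eq_top (n : ℕ) :
    (span ℂ (range (charCM (n := n)))).topologicalClosure = ⊤ := by
  rw [← charSubalgebra_coe]
  exact congr_arg (Subalgebra.toSubmodule <| StarSubalgebra.toSubalgebra ·)
    (charSubalgebra_closure_eq_top n)

lemma toLp_charCM {n : ℕ} (α : Fin n → ℤ) :
    ContinuousMap.toLp (E := ℂ) 2 (volume : Measure (Torus n)) ℂ (charCM α) = charL2 α := by
  apply Lp.ext ?_
  exact (ContinuousMap.coeFn_toLp _ _).trans (coeFn_charL2 α).symm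

lemma span_charL2_closure_eq_top (n : ℕ) :
    (span ℂ (range (charL2 (n := n)))).topologicalClosure = ⊤ := by
  have h := (ContinuousMap.toLp_denseRange ℂ (volume : Measure (Torus n)) ℂ
    (by norm_num : (2:ENNReal) ≠ ⊤)).topologicalClosure_map_submodule
    (span_charCM_closure_eq_top n)
  rw [Submodule.map_span] at h
  have hs : (ContinuousMap.toLp (E := ℂ) 2 (volume : Measure (Torus n)) ℂ) ''
      (range (charCM (n := n))) = range (charL2 (n := n)) := by
    ext f
    constructor
    · rintro ⟨-, ⟨α, rfl⟩, rfl⟩; exact ⟨α, (toLp_charCM α).symm⟩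
    · rintro ⟨α, rfl⟩; exact ⟨charCM α, ⟨α, rfl⟩, toLp_charCM α⟩
  rw [← hs]
  exact h

end Aux3
section Aux4
open MeasureTheory Submodule Set

def ISet (n : ℕ) : Set (Fin n → ℤ) :=
  {α : Fin n → ℤ | ∀ k : Fin n, 0 ≤ (∑ j ∈ Finset.Iic k, α j) + (k.val : ℤ)}

lemma mem_orth_closure_span_iff {E : Type*} [NormedAddCommGroup E]
    [InnerProductSpace ℂ E] (S : Set E) (x : E) :
    x ∈ ((span ℂ S).topologicalClosure)ᗮ ↔ ∀ s ∈ S, (inner ℂ x s : ℂ) = 0 := by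
  constructor
  · intro hx s hs
    exact (Submodule.mem_orthogonal' _ _).mp hx s
      ((span ℂ S).le_topologicalClosure (subset_span hs))
  · intro h
    rw [Submodule.mem_orthogonal']
    intro u hu
    have hle : span ℂ S ≤ (innerSL ℂ x).ker := by
      rw [span_le]
      intro s hs
      simpa using h s hs
    have hcl : (span ℂ S).topologicalClosure ≤ (innerSL ℂ x).ker :=
      Submodule.topologicalClosure_minimal _ hle (ContinuousLinearMap.isClosed_ker (innerSL ℂ x))
    simpa using hcl hu

lemma hardyT_le_orth (n : ℕ) :
    hardyT n ≤ ((span ℂ (charL2 '' (ISet n)ᶜ)).topologicalClosure)ᗮ := by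
  refine Submodule.topologicalClosure_minimal _ ?_ (Submodule.isClosed_orthogonal _)
  rw [span_le]
  rintro - ⟨α, hα, rfl⟩
  rw [SetLike.mem_coe, mem_orth_closure_span_iff]
  rintro - ⟨β, hβ, rfl⟩
  rw [inner_charL2, if_neg]
  rintro rfl
  exact hβ hα

lemma hardyT_eq_orth (n : ℕ) :
    hardyT n = ((span ℂ (charL2 '' (ISet n)ᶜ)).topologicalClosure)ᗮ := by
  refine le_antisymm (hardyT_le_orth n) ?_
  intro u hu
  obtain ⟨y, hy, z, hz, rfl⟩ := (hardyT n).exists_add_mem_mem_orthogonal u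
  have hzV : z ∈ ((span ℂ (charL2 '' (ISet n)ᶜ)).topologicalClosure)ᗮ := by
    have : z = (y + z) - y := by abel
    rw [this]
    exact Submodule.sub_mem _ hu (hardyT_le_orth n hy)
  have hall : ∀ α : Fin n → ℤ, (inner ℂ z (charL2 α) : ℂ) = 0 := by
    intro α
    by_cases hα : α ∈ ISet n
    · exact (Submodule.mem_orthogonal' _ _).mp hz _
        ((span ℂ _).le_topologicalClosure (subset_span ⟨α, hα, rfl⟩))
    · exact (mem_orth_closure_span_iff _ _).mp hzV _ ⟨α, hα, rfl⟩
  have hz0 : z = 0 := by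
    have : z ∈ ((span ℂ (range (charL2 (n := n)))).topologicalClosure)ᗮ := by
      rw [mem_orth_closure_span_iff]
      rintro - ⟨α, rfl⟩
      exact hall α
    rw [span_charL2_closure_eq_top, Submodule.top_orthogonal_eq_bot] at this
    simpa using this
  rw [hz0, add_zero]
  exact hy

end Aux4
section Aux5
open MeasureTheory Submodule Set

lemma memLp_conj_linf {n : ℕ} (χ : LinfT n) :
    MemLp (fun x => (starRingEnd ℂ) (χ x)) ⊤ (volume : Measure (Torus n)) := by
  refine ⟨Complex.continuous_conj.comp_aestronglyMeasurable (Lp.aestronglyMeasurable χ), ?_⟩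
  have he : eLpNorm (fun x => (starRingEnd ℂ) (χ x)) ⊤ (volume : Measure (Torus n)) =
      eLpNorm (⇑χ) ⊤ (volume : Measure (Torus n)) := by
    apply eLpNorm_congr_norm_ae
    filter_upwards with x
    simp
  rw [he]
  exact (Lp.memLp χ).2

def mulLp {n : ℕ} (χ : LinfT n) (u : L2T n) : L2T n :=
  ((Lp.memLp u).smul (p := ⊤) (r := 2) (Lp.memLp χ)).toLp (⇑χ • ⇑u)

lemma coeFn_mulLp {n : ℕ} (χ : LinfT n) (u : L2T n) :
    (mulLp χ u : Torus n → ℂ) =ᵐ[volume] fun x => χ x * u x := by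
  refine (MemLp.coeFn_toLp _).trans ?_
  filter_upwards with x
  simp [Pi.smul_apply', smul_eq_mul]

lemma inner_mulLp {n : ℕ} (g : L2T n) (χ : LinfT n) (u : L2T n) :
    (inner ℂ g (mulLp χ u) : ℂ) = ∫ x, (starRingEnd ℂ) (g x) * (χ x * u x) ∂volume := by
  rw [MeasureTheory.L2.inner_def]
  refine integral_congr_ae ?_
  filter_upwards [coeFn_mulLp χ u] with x hx
  rw [RCLike.inner_apply', hx]

def wBeta {n : ℕ} (χ : LinfT n) (β : Fin n → ℤ) : L2T n :=
  ((char_memLp β 2).smul (p := ⊤) (r := 2) (memLp_conj_linf χ)).toLp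
    ((fun x => (starRingEnd ℂ) (χ x)) • char β)

lemma coeFn_wBeta {n : ℕ} (χ : LinfT n) (β : Fin n → ℤ) :
    (wBeta χ β : Torus n → ℂ) =ᵐ[volume]
      fun x => (starRingEnd ℂ) (χ x) * char β x := by
  refine (MemLp.coeFn_toLp _).trans ?_
  filter_upwards with x
  simp [Pi.smul_apply', smul_eq_mul]

lemma inner_wBeta_charL2 {n : ℕ} (χ : LinfT n) (β α : Fin n → ℤ) :
    (inner ℂ (wBeta χ β) (charL2 α) : ℂ) = ∫ x, χ x * char (α - β) x ∂volume := by
  rw [MeasureTheory.L2.inner_def]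
  refine integral_congr_ae ?_
  filter_upwards [coeFn_wBeta χ β, coeFn_charL2 α] with x hx hy
  rw [RCLike.inner_apply', hx, hy, ← char_conj_mul β α x]
  simp only [map_mul, Complex.conj_conj]
  ring

lemma inner_wBeta_eq {n : ℕ} (χ : LinfT n) (β : Fin n → ℤ) (u : L2T n) :
    (inner ℂ (wBeta χ β) u : ℂ) = ∫ x, (starRingEnd ℂ) (char β x) * (χ x * u x) ∂volume := by
  rw [MeasureTheory.L2.inner_def]
  refine integral_congr_ae ?_
  filter_upwards [coeFn_wBeta χ β] with x hx
  rw [RCLike.inner_apply', hx]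
  simp only [map_mul, Complex.conj_conj]
  ring

lemma mulLp_mem_hardyT {n : ℕ} (χ : LinfT n) (hχ : IsAnalyticSymbolF (⇑χ))
    {u : L2T n} (hu : u ∈ hardyT n) : mulLp χ u ∈ hardyT n := by
  rw [hardyT_eq_orth, mem_orth_closure_span_iff]
  rintro - ⟨β, hβ, rfl⟩
  suffices h : (inner ℂ (charL2 β) (mulLp χ u) : ℂ) = 0 by
    rw [← inner_conj_symm, h, map_zero]
  have h1 : (inner ℂ (charL2 β) (mulLp χ u) : ℂ) = inner ℂ (wBeta χ β) u := by
    rw [inner_mulLp, inner_wBeta_eq]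
    refine integral_congr_ae ?_
    filter_upwards [coeFn_charL2 β] with x hx
    rw [hx]
  rw [h1]
  -- u belongs to the closure of the span of analytic characters
  have hle : Submodule.span ℂ (charL2 '' ISet n) ≤
      (innerSL ℂ (wBeta χ β)).ker := by
    rw [span_le]
    rintro - ⟨α, hα, rfl⟩
    have hcond : ¬ ∀ k : Fin n, 0 ≤ ∑ j ∈ Finset.Iic k, (β - α) j := by
      have hβ' : ¬ ∀ k : Fin n, 0 ≤ (∑ j ∈ Finset.Iic k, β j) + (k.val : ℤ) := hβ
      push_neg at hβ'
      obtain ⟨k, hk⟩ := hβ'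
      refine fun hc => absurd (hc k) ?_
      have h2 := hα k
      simp only [Pi.sub_apply, Finset.sum_sub_distrib]
      intro hcon
      linarith
    have h0 := hχ (β - α) hcond
    have : (inner ℂ (wBeta χ β) (charL2 α) : ℂ) = 0 := by
      rw [inner_wBeta_charL2]
      have : α - β = -(β - α) := by rw [neg_sub]
      rw [this]
      exact h0
    simpa using this
  have hcl : hardyT n ≤ (innerSL ℂ (wBeta χ β)).ker :=
    Submodule.topologicalClosure_minimal _ hle
      (ContinuousLinearMap.isClosed_ker (innerSL ℂ (wBeta χ β)))
  simpa using hcl hu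

end Aux5
section Aux6
open MeasureTheory Submodule Set

lemma IsAnalyticSymbolF.congr_ae {n : ℕ} {f g : Torus n → ℂ}
    (h : f =ᵐ[volume] g) (hf : IsAnalyticSymbolF f) : IsAnalyticSymbolF g := by
  intro α hα
  rw [← hf α hα]
  refine integral_congr_ae ?_
  filter_upwards [h] with x hx
  rw [hx]

theorem stmt4' {n : ℕ} (hn : 2 ≤ n) (φ ψ : LinfT n)
    (hanalytic : IsAnalyticSymbolF (fun x => conj (φ x)) ∨ IsAnalyticSymbolF (⇑ψ))
    (Tφ Tψ Tφψ : hardyT n →L[ℂ] hardyT n)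
    (hTφ : IsToeplitzOn (hardyT n) (⇑φ) Tφ)
    (hTψ : IsToeplitzOn (hardyT n) (⇑ψ) Tψ)
    (hTφψ : IsToeplitzOn (hardyT n) (fun x => φ x * ψ x) Tφψ) :
    Tφ.comp Tψ = Tφψ := by
  refine ContinuousLinearMap.ext fun f => ?_
  refine ext_inner_left ℂ fun g => ?_
  rw [ContinuousLinearMap.comp_apply, Submodule.coe_inner, Submodule.coe_inner]
  have L := hTφ (Tψ f) g
  have R := hTφψ f g
  rw [L, R]
  rcases hanalytic with hφa | hψa
  · -- conj φ analytic
    set cφ : LinfT n := (memLp_conj_linf φ).toLp _ with hcφ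
    have hcφ_coe : (cφ : Torus n → ℂ) =ᵐ[volume] fun x => conj (φ x) :=
      (memLp_conj_linf φ).coeFn_toLp
    have hcφa : IsAnalyticSymbolF (⇑cφ) :=
      IsAnalyticSymbolF.congr_ae hcφ_coe.symm hφa
    have hg'mem : mulLp cφ (g : L2T n) ∈ hardyT n :=
      mulLp_mem_hardyT cφ hcφa g.2
    set g' : hardyT n := ⟨mulLp cφ (g : L2T n), hg'mem⟩ with hg'
    have step1 : ∫ x, conj ((g : L2T n) x) * (φ x * ((Tψ f : L2T n)) x) ∂volume =
        (inner ℂ ((g' : L2T n)) ((Tψ f : L2T n)) : ℂ) := by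
      rw [MeasureTheory.L2.inner_def]
      refine integral_congr_ae ?_
      filter_upwards [coeFn_mulLp cφ (g : L2T n), hcφ_coe] with x hx1 hx2
      rw [RCLike.inner_apply']
      show conj ((g : L2T n) x) * (φ x * ((Tψ f : L2T n)) x) =
        conj ((mulLp cφ (g : L2T n)) x) * ((Tψ f : L2T n)) x
      rw [hx1, map_mul, hx2, Complex.conj_conj]
      ring
    have step2 := hTψ f g'
    rw [step1, step2]
    refine integral_congr_ae ?_
    filter_upwards [coeFn_mulLp cφ (g : L2T n), hcφ_coe] with x hx1 hx2
    show conj ((mulLp cφ (g : L2T n)) x) * (ψ x * ((f : L2T n)) x) =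
      conj ((g : L2T n) x) * (φ x * ψ x * ((f : L2T n)) x)
    rw [hx1, map_mul, hx2, Complex.conj_conj]
    ring
  · -- ψ analytic
    have hmem : mulLp ψ (f : L2T n) ∈ hardyT n := mulLp_mem_hardyT ψ hψa f.2
    have hTψf : ((Tψ f : L2T n)) = mulLp ψ (f : L2T n) := by
      have hKmem : ((Tψ f : L2T n)) - mulLp ψ (f : L2T n) ∈ hardyT n :=
        Submodule.sub_mem _ (Tψ f).2 hmem
      have hd : (inner ℂ (((Tψ f : L2T n)) - mulLp ψ (f : L2T n))
          (((Tψ f : L2T n)) - mulLp ψ (f : L2T n)) : ℂ) = 0 := by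
        rw [inner_sub_right, hTψ f ⟨_, hKmem⟩, inner_mulLp, sub_eq_zero]
      rw [← sub_eq_zero]
      exact inner_self_eq_zero.mp hd
    refine integral_congr_ae ?_
    filter_upwards [coeFn_mulLp ψ (f : L2T n)] with x hx
    show conj ((g : L2T n) x) * (φ x * ((Tψ f : L2T n)) x) =
      conj ((g : L2T n) x) * (φ x * ψ x * ((f : L2T n)) x)
    rw [hTψf, hx]
    ring

end Aux6

/-- If `ψ` is analytic or `conj φ` is analytic, then `T_{φ,△ₙ} T_{ψ,△ₙ} = T_{φψ,△ₙ}`. -/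
theorem stmt4 {n : ℕ} (hn : 2 ≤ n) (φ ψ : LinfT n)
    (hanalytic : IsAnalyticSymbolF (fun x => conj (φ x)) ∨ IsAnalyticSymbolF (⇑ψ))
    (Tφ Tψ Tφψ : hardyT n →L[ℂ] hardyT n)
    (hTφ : IsToeplitzOn (hardyT n) (⇑φ) Tφ)
    (hTψ : IsToeplitzOn (hardyT n) (⇑ψ) Tψ)
    (hTφψ : IsToeplitzOn (hardyT n) (fun x => φ x * ψ x) Tφψ) :
    Tφ.comp Tψ = Tφψ :=
  stmt4' hn φ ψ hanalytic Tφ Tψ Tφψ hTφ hTψ hTφψ
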